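/- For all τ in the complex upper half-plane ℍ and all z ∈ ℂ, θ_{0,1}(τ,z)·θ_{1,1}(τ,z) = (η(τ)²/η(τ/2))·θ_{1,1}(τ/2,z). -/

import Mathlib

/-- The Dedekind eta function `η(τ) = e^{πiτ/12} ∏_{n≥1} (1 − e^{2πinτ})`. -/
noncomputable def eta (τ : ℂ) : ℂ :=
  Complex.exp (Real.pi * Complex.I * τ / 12) *
    ∏' n : ℕ, (1 - Complex.exp (2 * Real.pi * Complex.I * (n + 1) * τ))

/-- The classical theta function
`θ_{μ,ν}(τ,z) = ∑_{n∈ℤ} e^{πinν} e^{πiτ(n+μ/2)²} e^{2πiz(n+μ/2)}`. -/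
noncomputable def theta (μ ν : ℚ) (τ z : ℂ) : ℂ :=
  ∑' n : ℤ, Complex.exp (Real.pi * Complex.I * n * ν) *
    Complex.exp (Real.pi * Complex.I * τ * (n + μ / 2) ^ 2) *
    Complex.exp (2 * Real.pi * Complex.I * z * (n + μ / 2))

namespace ThetaHalv

open Complex Real Filter Finset Topology

lemma norm_log_le {w : ℂ} {r : ℝ} (hw : ‖w‖ ≤ r) (hr : r < 1) :
    ‖Complex.log (1 + w)‖ ≤ (1 + (1 - r)⁻¹ / 2) * ‖w‖ := by
  have h1 : ‖w‖ < 1 := lt_of_le_of_lt hw hr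
  have h2 := Complex.norm_log_one_add_sub_self_le h1
  have h0 : (0:ℝ) ≤ ‖w‖ := norm_nonneg w
  have hinv : (1 - ‖w‖)⁻¹ ≤ (1 - r)⁻¹ := inv_anti₀ (by linarith) (by linarith)
  have hinv0 : (0:ℝ) ≤ (1 - ‖w‖)⁻¹ := le_of_lt (by apply inv_pos.2; linarith)
  have hsq : ‖w‖ ^ 2 * (1 - ‖w‖)⁻¹ ≤ ‖w‖ * (1 - r)⁻¹ := by
    have : ‖w‖ ^ 2 ≤ ‖w‖ := by nlinarith
    calc ‖w‖ ^ 2 * (1 - ‖w‖)⁻¹ ≤ ‖w‖ * (1 - ‖w‖)⁻¹ := by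
          exact mul_le_mul_of_nonneg_right this hinv0
      _ ≤ ‖w‖ * (1 - r)⁻¹ := mul_le_mul_of_nonneg_left hinv h0
  calc ‖Complex.log (1+w)‖ ≤ ‖Complex.log (1+w) - w‖ + ‖w‖ := by
        simpa using norm_add_le (Complex.log (1+w) - w) w
    _ ≤ ‖w‖^2 * (1-‖w‖)⁻¹/2 + ‖w‖ := by linarith
    _ ≤ (1 + (1-r)⁻¹/2) * ‖w‖ := by linarith

lemma one_add_ne {x : ℂ} {r : ℝ} (hr : r < 1) (hx : ‖x‖ ≤ r) : (1 : ℂ) + x ≠ 0 := by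
  intro h
  have hx1 : x = -1 := by linear_combination h
  rw [hx1] at hx
  simp at hx
  linarith

lemma summable_log {x : ℕ → ℂ} {r : ℝ} (hr : r < 1)
    (hx : ∀ n, ‖x n‖ ≤ r) (hs : Summable fun n => ‖x n‖) :
    Summable (fun n => Complex.log (1 + x n)) :=
  Summable.of_norm_bounded (hs.mul_left (1 + (1-r)⁻¹/2)) fun n => norm_log_le (hx n) hr

lemma multipliable_block {x : ℕ → ℂ} {r : ℝ} (hr : r < 1)
    (hx : ∀ n, ‖x n‖ ≤ r) (hs : Summable fun n => ‖x n‖) :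
    Multipliable (fun n => 1 + x n) :=
  Complex.multipliable_of_summable_log (summable_log hr hx hs)

lemma tprod_ne_zero {x : ℕ → ℂ} {r : ℝ} (hr : r < 1)
    (hx : ∀ n, ‖x n‖ ≤ r) (hs : Summable fun n => ‖x n‖) :
    ∏' n, (1 + x n) ≠ 0 := by
  have h := Complex.cexp_tsum_eq_tprod (f := fun n => 1 + x n)
    (fun n => one_add_ne hr (hx n)) (summable_log hr hx hs)
  have h2 := h
  rw [← h2]
  exact Complex.exp_ne_zero _

lemma real_neg_log_bound {x r : ℝ} (h0 : 0 ≤ x) (hx : x ≤ r) (hr : r < 1) :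
    -Real.log (1-x) ≤ (1-r)⁻¹ * x := by
  have hx1 : x < 1 := lt_of_le_of_lt hx hr
  have hpos : (0:ℝ) < 1 - x := by linarith
  have h1 : Real.log (1-x)⁻¹ ≤ (1-x)⁻¹ - 1 := Real.log_le_sub_one_of_pos (by positivity)
  rw [Real.log_inv] at h1
  have h2 : (1-x)⁻¹ - 1 = x / (1-x) := by field_simp; ring
  have h3 : x / (1-x) ≤ x / (1-r) := by
    apply div_le_div_of_nonneg_left h0 (by linarith) (by linarith)
  have h5 : x / (1 - r) = (1-r)⁻¹ * x := div_eq_inv_mul x _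
  linarith

lemma summable_real_log {r : ℝ} (h0 : 0 ≤ r) (hr : r < 1) :
    Summable (fun j : ℕ => Real.log (1 - r^(j+1))) := by
  refine Summable.of_norm_bounded (g := fun j => (1-r)⁻¹ * r^(j+1))
    (((summable_geometric_of_lt_one h0 hr).mul_left r).mul_left (1-r)⁻¹ |>.congr ?_) ?_
  swap
  · intro j
    have hrj : r^(j+1) ≤ r := by
      calc r^(j+1) ≤ r^1 := pow_le_pow_of_le_one h0 hr.le (by omega)
        _ = r := pow_one r
    have hrj0 : 0 ≤ r^(j+1) := by positivity
    have hlog : Real.log (1 - r^(j+1)) ≤ 0 :=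
      Real.log_nonpos (by nlinarith) (by nlinarith)
    rw [Real.norm_eq_abs, abs_of_nonpos hlog]
    exact real_neg_log_bound hrj0 hrj hr
  · intro j; ring

lemma prod_one_sub_lower {r : ℝ} (h0 : 0 ≤ r) (hr : r < 1) {f : ℕ → ℂ}
    (hf : ∀ j, ‖f j‖ ≤ r^(j+1)) (k : ℕ) :
    rexp (∑' j:ℕ, Real.log (1 - r^(j+1))) ≤ ‖∏ j ∈ Finset.range k, (1 - f j)‖ := by
  have hrj : ∀ j : ℕ, r^(j+1) < 1 := fun j => by
    calc r^(j+1) ≤ r^1 := pow_le_pow_of_le_one h0 hr.le (by omega)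
      _ = r := pow_one r
      _ < 1 := hr
  have step1 : ∑' j:ℕ, Real.log (1 - r^(j+1)) ≤ ∑ j ∈ Finset.range k, Real.log (1 - r^(j+1)) := by
    have := Summable.sum_le_tsum (f := fun j : ℕ => -Real.log (1 - r^(j+1))) (Finset.range k)
      (fun j _ => by
        have ha := hrj j
        have hb : (0:ℝ) ≤ r^(j+1) := by positivity
        have hc : Real.log (1 - r^(j+1)) ≤ 0 := Real.log_nonpos (by linarith) (by linarith)
        simpa using hc)
      ((summable_real_log h0 hr).neg)
    rw [tsum_neg] at this
    simp only [Finset.sum_neg_distrib] at this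
    linarith
  calc rexp (∑' j:ℕ, Real.log (1 - r^(j+1)))
      ≤ rexp (∑ j ∈ Finset.range k, Real.log (1 - r^(j+1))) := Real.exp_le_exp.2 step1
    _ = ∏ j ∈ Finset.range k, (1 - r^(j+1)) := by
        rw [Real.exp_sum]
        refine Finset.prod_congr rfl fun j _ => Real.exp_log ?_
        have ha := hrj j
        have hb : (0:ℝ) ≤ r^(j+1) := by positivity
        linarith
    _ ≤ ∏ j ∈ Finset.range k, ‖(1:ℂ) - f j‖ := by
        apply Finset.prod_le_prod
        · intro j _
          have ha := hrj j
          have hb : (0:ℝ) ≤ r^(j+1) := by positivity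
          linarith
        · intro j _
          calc 1 - r^(j+1) ≤ 1 - ‖f j‖ := by linarith [hf j]
            _ ≤ ‖(1:ℂ) - f j‖ := by
                have := norm_sub_norm_le (1:ℂ) (f j)
                simpa using this
    _ = ‖∏ j ∈ Finset.range k, ((1:ℂ) - f j)‖ := by rw [norm_prod]

lemma prod_upper {r : ℝ} (h0 : 0 ≤ r) (hr : r < 1) {f : ℕ → ℂ}
    (hf : ∀ j, ‖f j‖ ≤ r^(j+1)) (k : ℕ) :
    ‖∏ j ∈ Finset.range k, (1 - f j)‖ ≤ rexp (∑' j:ℕ, (r^(j+1) : ℝ)) := by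
  have hsum : Summable (fun j : ℕ => (r^(j+1):ℝ)) :=
    ((summable_geometric_of_lt_one h0 hr).mul_left r).congr (fun j => by ring)
  calc ‖∏ j ∈ Finset.range k, ((1:ℂ) - f j)‖ = ∏ j ∈ Finset.range k, ‖(1:ℂ) - f j‖ := norm_prod _ _
    _ ≤ ∏ j ∈ Finset.range k, rexp (r^(j+1)) := by
        apply Finset.prod_le_prod (fun j _ => norm_nonneg _)
        intro j _
        calc ‖(1:ℂ) - f j‖ ≤ ‖(1:ℂ)‖ + ‖f j‖ := norm_sub_le _ _
          _ = 1 + ‖f j‖ := by simp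
          _ ≤ 1 + r^(j+1) := by linarith [hf j]
          _ ≤ rexp (r^(j+1)) := by linarith [Real.add_one_le_exp (r^(j+1))]
    _ = rexp (∑ j ∈ Finset.range k, (r^(j+1):ℝ)) := (Real.exp_sum _ _).symm
    _ ≤ rexp (∑' j:ℕ, (r^(j+1):ℝ)) := by
        apply Real.exp_le_exp.2
        exact Summable.sum_le_tsum _ (fun j _ => by positivity) hsum



lemma summable_exp_quad (a b : ℝ) (ha : a < 0) :
    Summable (fun n : ℤ => rexp (a * (n:ℝ)^2 + b * n)) := by
  have hT : 0 < -a / π := div_pos (by linarith) Real.pi_pos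
  have hb := summable_pow_mul_jacobiTheta₂_term_bound (|b| / (2*π)) hT 0
  refine Summable.of_nonneg_of_le (fun n => (Real.exp_pos _).le) (fun n => ?_) hb
  simp only [pow_zero, one_mul]
  apply Real.exp_le_exp.2
  simp only [Int.cast_abs]
  have hpi : (π:ℝ) ≠ 0 := Real.pi_ne_zero
  have heq : -π * ((-a/π) * (n:ℝ)^2 - 2 * (|b|/(2*π)) * |(n:ℝ)|) = a * (n:ℝ)^2 + |b| * |(n:ℝ)| := by
    field_simp
    ring
  rw [heq]
  have hbn : b * (n:ℝ) ≤ |b| * |(n:ℝ)| := by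
    calc b*(n:ℝ) ≤ |b*(n:ℝ)| := le_abs_self _
      _ = |b| * |(n:ℝ)| := abs_mul b n
  linarith

lemma norm_cexp_quad (a b : ℂ) (n : ℤ) :
    ‖cexp (a * (n:ℂ)^2 + b * n)‖ = rexp (a.re * (n:ℝ)^2 + b.re * n) := by
  rw [Complex.norm_exp]
  congr 1
  have h1 : ((n:ℂ)^2) = (((n^2 : ℤ) : ℝ) : ℂ) := by push_cast; ring
  have h2 : ((n:ℂ)) = (((n : ℤ) : ℝ) : ℂ) := by push_cast; ring
  rw [h1, h2, Complex.add_re, Complex.mul_re, Complex.mul_re]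
  simp only [Complex.ofReal_re, Complex.ofReal_im, mul_zero, sub_zero]
  push_cast
  ring

lemma summable_norm_cexp_quad (a b : ℂ) (ha : a.re < 0) :
    Summable (fun n : ℤ => ‖cexp (a * (n:ℂ)^2 + b * n)‖) := by
  simp only [norm_cexp_quad]
  exact summable_exp_quad a.re b.re ha

lemma summable_cexp_quad (a b : ℂ) (ha : a.re < 0) :
    Summable (fun n : ℤ => cexp (a * (n:ℂ)^2 + b * n)) :=
  (summable_norm_cexp_quad a b ha).of_norm

lemma summable_zpow_sq (r s : ℝ) (hr0 : 0 < r) (hr1 : r < 1) (hs : 0 < s) :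
    Summable (fun m : ℤ => r ^ (m^2) * s ^ m) := by
  have key : ∀ m : ℤ, r ^ (m^2) * s ^ m = rexp (Real.log r * (m:ℝ)^2 + Real.log s * m) := by
    intro m
    rw [Real.exp_add]
    congr 1
    · rw [← Real.rpow_intCast r (m^2), Real.rpow_def_of_pos hr0]
      congr 1
      push_cast
      ring
    · rw [← Real.rpow_intCast s m, Real.rpow_def_of_pos hs]
  simp only [key]
  exact summable_exp_quad _ _ (Real.log_neg hr0 hr1)



noncomputable def Dp (Q : ℂ) (k : ℕ) : ℂ := ∏ j ∈ Finset.range k, (1 - Q^(j+1))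

lemma Dp_zero (Q : ℂ) : Dp Q 0 = 1 := Finset.prod_range_zero _

lemma Dp_succ (Q : ℂ) (k : ℕ) : Dp Q (k+1) = Dp Q k * (1 - Q^(k+1)) :=
  Finset.prod_range_succ _ _

lemma one_sub_pow_ne_zero {Q : ℂ} (hQ : ‖Q‖ < 1) (j : ℕ) : (1:ℂ) - Q^(j+1) ≠ 0 := by
  intro h
  have h1 : Q^(j+1) = 1 := by linear_combination -h
  have h2 : ‖Q^(j+1)‖ = 1 := by rw [h1]; simp
  rw [norm_pow] at h2
  have h3 : ‖Q‖^(j+1) < 1 := pow_lt_one₀ (norm_nonneg Q) hQ (by omega)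
  rw [h2] at h3
  exact lt_irrefl 1 h3

lemma Dp_ne_zero {Q : ℂ} (hQ : ‖Q‖ < 1) (k : ℕ) : Dp Q k ≠ 0 :=
  Finset.prod_ne_zero_iff.2 fun j _ => one_sub_pow_ne_zero hQ j

noncomputable def Ee (Q : ℂ) : ℕ → ℂ
  | 0 => 1
  | (k+1) => Ee Q k * Q^k

lemma pascal {Q : ℂ} (hQ : ‖Q‖ < 1) (a b : ℕ) :
    Dp Q (a+b+2) / (Dp Q (a+1) * Dp Q (b+1)) =
      Dp Q (a+b+1) / (Dp Q (a+1) * Dp Q b)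
        + Q^(b+1) * (Dp Q (a+b+1) / (Dp Q a * Dp Q (b+1))) := by
  have h1 : Dp Q (a+b+2) = Dp Q (a+b+1) * (1 - Q^(a+b+2)) := Dp_succ Q (a+b+1)
  have h2 : Dp Q (b+1) = Dp Q b * (1 - Q^(b+1)) := Dp_succ Q b
  have h3 : Dp Q (a+1) = Dp Q a * (1 - Q^(a+1)) := Dp_succ Q a
  have n1 := Dp_ne_zero hQ a
  have n2 := Dp_ne_zero hQ b
  have n3 := one_sub_pow_ne_zero hQ a
  have n4 := one_sub_pow_ne_zero hQ b
  rw [h1, h2, h3]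
  field_simp
  ring

lemma gauss {Q : ℂ} (hQ : ‖Q‖ < 1) (x : ℂ) :
    ∀ n : ℕ, ∏ j ∈ Finset.range n, (1 + x * Q^j)
      = ∑ k ∈ Finset.range (n+1), Dp Q n / (Dp Q k * Dp Q (n-k)) * Ee Q k * x^k := by
  intro n
  induction n with
  | zero => simp [Dp_zero, Ee]
  | succ n ih =>
    set f : ℕ → ℂ := fun k => Dp Q (n+1) / (Dp Q k * Dp Q (n+1-k)) * Ee Q k * x^k with hf
    set g : ℕ → ℂ := fun k => Dp Q n / (Dp Q k * Dp Q (n-k)) * Ee Q k * x^k with hg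
    have key0 : g 0 = f 0 := by
      simp only [hf, hg, Nat.sub_zero, pow_zero, mul_one]
      have := Dp_ne_zero hQ n
      have := Dp_ne_zero hQ (n+1)
      rw [Dp_zero]
      field_simp
    have keytop : g n * (x * Q^n) = f (n+1) := by
      simp only [hf, hg, Nat.sub_self]
      have := Dp_ne_zero hQ n
      have := Dp_ne_zero hQ (n+1)
      rw [Dp_zero, show Ee Q (n+1) = Ee Q n * Q^n from rfl]
      field_simp
      ring
    have keymid : ∀ i ∈ Finset.range n, f (i+1) = g (i+1) + g i * (x * Q^n) := by
      intro i hi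
      rw [Finset.mem_range] at hi
      obtain ⟨b, hb⟩ : ∃ b, n = i + b + 1 := ⟨n - i - 1, by omega⟩
      subst hb
      simp only [hf, hg, show i + b + 1 + 1 - (i+1) = b + 1 from by omega,
        show i + b + 1 - (i+1) = b from by omega, show i + b + 1 - i = b + 1 from by omega,
        show i + b + 1 + 1 = i + b + 2 from by omega,
        show Ee Q (i+1) = Ee Q i * Q^i from rfl]
      have hp := pascal hQ i b
      have n1 := Dp_ne_zero hQ i
      have n2 := Dp_ne_zero hQ (i+1)
      have n3 := Dp_ne_zero hQ b
      have n4 := Dp_ne_zero hQ (b+1)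
      have n5 := Dp_ne_zero hQ (i+b+1)
      have n6 := Dp_ne_zero hQ (i+b+2)
      linear_combination (Ee Q i * Q^i * x^(i+1)) * hp
    rw [Finset.prod_range_succ, ih]
    show (∑ k ∈ Finset.range (n+1), g k) * (1 + x * Q^n) = ∑ k ∈ Finset.range (n+2), f k
    rw [mul_add, mul_one, Finset.sum_mul, Finset.sum_range_succ' f (n+1),
      Finset.sum_range_succ (fun i => f (i+1)) n,
      Finset.sum_range_succ' g n, Finset.sum_range_succ (fun k => g k * (x * Q^n)) n,
      Finset.sum_congr rfl keymid]
    simp only [Finset.sum_add_distrib]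
    rw [key0, keytop]
    ring




lemma Ee_q_sq (q : ℂ) (hq0 : q ≠ 0) (k : ℕ) : Ee (q^2) k = q^(k^2) * (q^k)⁻¹ := by
  induction k with
  | zero => simp [Ee]
  | succ k ih =>
    rw [show Ee (q^2) (k+1) = Ee (q^2) k * (q^2)^k from rfl, ih]
    field_simp
    ring

noncomputable def uu (q z : ℂ) (N : ℕ) (m : ℤ) : ℂ :=
  if m.natAbs ≤ N then
    Dp (q^2) (2*N) / (Dp (q^2) ((N:ℤ)+m).toNat * Dp (q^2) ((N:ℤ)-m).toNat) * q^(m^2) * z^m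
  else 0

lemma pow_ident (q z : ℂ) (hq0 : q ≠ 0) (hz : z ≠ 0) (N k : ℕ) (hk : k ≤ 2*N) :
    q^(((k:ℤ) - N)^2) * z^((k:ℤ)-N)
      = q^(N^2) * (z^N)⁻¹ * (Ee (q^2) k * (z * (q^(2*N))⁻¹ * q)^k) := by
  rw [Ee_q_sq q hq0 k]
  rcases le_total N k with h | h
  · obtain ⟨d, rfl⟩ : ∃ d, k = N + d := ⟨k - N, by omega⟩
    rw [show ((N + d : ℕ):ℤ) - (N:ℤ) = (d:ℤ) from by push_cast; ring,
        show ((d:ℤ))^2 = ((d^2 : ℕ) : ℤ) from by push_cast; ring,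
        zpow_natCast, zpow_natCast]
    field_simp
    rw [div_pow]
    field_simp
    ring
  · obtain ⟨d, rfl⟩ : ∃ d, N = k + d := ⟨N - k, by omega⟩
    rw [show ((k:ℕ):ℤ) - ((k + d : ℕ):ℤ) = -(d:ℤ) from by push_cast; ring,
        show (-(d:ℤ))^2 = ((d^2 : ℕ) : ℤ) from by push_cast; ring,
        zpow_natCast, zpow_neg, zpow_natCast]
    field_simp
    rw [div_pow]
    field_simp
    ring



lemma sum_odds (N : ℕ) : ∑ i ∈ Finset.range N, (2*i+1) = N^2 := by
  induction N with
  | zero => simp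
  | succ N ih => rw [Finset.sum_range_succ, ih]; ring

lemma uu_eval (q z : ℂ) (hq0 : q ≠ 0) (hz : z ≠ 0) (N k : ℕ) (hk : k ≤ 2*N) :
    uu q z N ((k:ℤ) - N)
      = Dp (q^2) (2*N) / (Dp (q^2) k * Dp (q^2) (2*N-k)) *
        (q^(N^2) * ((z:ℂ)^N)⁻¹ * (Ee (q^2) k * (z * (q^(2*N))⁻¹ * q)^k)) := by
  simp only [uu]
  rw [if_pos (by omega : ((k:ℤ)-(N:ℤ)).natAbs ≤ N),
    show ((N:ℤ) + ((k:ℤ)-(N:ℤ))).toNat = k from by omega,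
    show ((N:ℤ) - ((k:ℤ)-(N:ℤ))).toNat = 2*N - k from by omega,
    mul_assoc, pow_ident q z hq0 hz N k hk]

lemma finite_jtp (q z : ℂ) (hq0 : q ≠ 0) (hq1 : ‖q‖ < 1) (hz : z ≠ 0) (N : ℕ) :
    ∑' m : ℤ, uu q z N m
      = ∏ i ∈ Finset.range N, ((1 + z*q^(2*i+1)) * (1 + z⁻¹*q^(2*i+1))) := by
  have hQ : ‖(q:ℂ)^2‖ < 1 := by
    rw [norm_pow]; exact pow_lt_one₀ (norm_nonneg q) hq1 two_ne_zero
  set x : ℂ := z * (q^(2*N))⁻¹ * q with hx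
  have h1 : ∑' m : ℤ, uu q z N m = ∑ m ∈ Finset.Icc (-(N:ℤ)) (N:ℤ), uu q z N m := by
    apply tsum_eq_sum
    intro m hm
    rw [Finset.mem_Icc] at hm
    simp only [uu]
    rw [if_neg (by omega)]
  have h2 : ∑ m ∈ Finset.Icc (-(N:ℤ)) (N:ℤ), uu q z N m
      = ∑ k ∈ Finset.range (2*N+1), uu q z N ((k:ℤ) - N) := by
    apply Finset.sum_nbij' (i := fun (m:ℤ) => ((m:ℤ) + N).toNat) (j := fun (k:ℕ) => (k:ℤ) - N)
    · intro m hm; rw [Finset.mem_Icc] at hm; rw [Finset.mem_range]; omega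
    · intro k hk; rw [Finset.mem_range] at hk; rw [Finset.mem_Icc]; omega
    · intro m hm; rw [Finset.mem_Icc] at hm; omega
    · intro k hk; rw [Finset.mem_range] at hk; omega
    · intro m hm; rw [Finset.mem_Icc] at hm
      congr 1
      omega
  have h3 : ∑ k ∈ Finset.range (2*N+1), uu q z N ((k:ℤ) - N)
      = (q^(N^2) * ((z:ℂ)^N)⁻¹) *
          ∑ k ∈ Finset.range (2*N+1),
            Dp (q^2) (2*N) / (Dp (q^2) k * Dp (q^2) (2*N-k)) * Ee (q^2) k * x^k := by
    rw [Finset.mul_sum]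
    apply Finset.sum_congr rfl
    intro k hk
    rw [Finset.mem_range] at hk
    rw [uu_eval q z hq0 hz N k (by omega)]
    ring
  have h4 := gauss hQ x (2*N)
  have h5 : ∏ j ∈ Finset.range (2*N), (1 + x*(q^2)^j)
      = (∏ i ∈ Finset.range N, (1 + x*(q^2)^(N-1-i))) *
        ∏ i ∈ Finset.range N, (1 + x*(q^2)^(N+i)) := by
    rw [two_mul, Finset.prod_range_add]
    congr 1
    exact (Finset.prod_range_reflect (fun j => 1 + x*(q^2)^j) N).symm
  have e1 : ∀ i ∈ Finset.range N, 1 + x*(q^2)^(N+i) = 1 + z*q^(2*i+1) := by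
    intro i _
    rw [hx]
    field_simp
    ring
  have e2 : ∀ i ∈ Finset.range N,
      1 + x*(q^2)^(N-1-i) = z * (q^(2*i+1))⁻¹ * (1 + z⁻¹ * q^(2*i+1)) := by
    intro i hi
    rw [Finset.mem_range] at hi
    obtain ⟨j, rfl⟩ : ∃ j, N = i + j + 1 := ⟨N - i - 1, by omega⟩
    rw [show i + j + 1 - 1 - i = j from by omega, hx]
    field_simp
    ring
  have h6 : ∏ i ∈ Finset.range N, (1 + x*(q^2)^(N-1-i))
      = z^N * ((q^(N^2) : ℂ))⁻¹ * ∏ i ∈ Finset.range N, (1 + z⁻¹ * q^(2*i+1)) := by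
    rw [Finset.prod_congr rfl e2, Finset.prod_mul_distrib, Finset.prod_mul_distrib,
      Finset.prod_const, Finset.card_range, Finset.prod_inv_distrib, Finset.prod_pow_eq_pow_sum, sum_odds]
  have hzN : ((z:ℂ)^N) ≠ 0 := pow_ne_zero _ hz
  have hqN : ((q:ℂ)^(N^2)) ≠ 0 := pow_ne_zero _ hq0
  rw [h1, h2, h3, ← h4, h5, h6, Finset.prod_congr rfl e1, Finset.prod_mul_distrib]
  field_simp


lemma geom_block {c w : ℂ} {a b : ℕ} (ha : 1 ≤ a) (hb : 1 ≤ b) (hw : ‖w‖ < 1)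
    (hc : ‖c * w^b‖ < 1) :
    (∀ n : ℕ, ‖c * w^(a*n+b)‖ ≤ ‖c * w^b‖) ∧ Summable (fun n : ℕ => ‖c * w^(a*n+b)‖) := by
  constructor
  · intro n
    rw [norm_mul, norm_mul, norm_pow, norm_pow]
    have h1 : ‖w‖^(a*n+b) ≤ ‖w‖^b := pow_le_pow_of_le_one (norm_nonneg w) hw.le (by omega)
    exact mul_le_mul_of_nonneg_left h1 (norm_nonneg c)
  · have hgeom : Summable (fun n : ℕ => ‖c‖ * ‖w‖^b * (‖w‖^a)^n) :=
      (summable_geometric_of_lt_one (pow_nonneg (norm_nonneg w) a)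
        (pow_lt_one₀ (norm_nonneg w) hw (by omega))).mul_left _
    apply Summable.of_nonneg_of_le (fun n => norm_nonneg _) (fun n => ?_) hgeom
    rw [norm_mul, norm_pow]
    rw [show a*n+b = b + a*n from by omega, pow_add, pow_mul]
    ring_nf
    exact le_refl _

lemma multipliable_geom {c w : ℂ} {a b : ℕ} (ha : 1 ≤ a) (hb : 1 ≤ b) (hw : ‖w‖ < 1)
    (hc : ‖c * w^b‖ < 1) :
    Multipliable (fun n : ℕ => 1 + c * w^(a*n+b)) :=
  multipliable_block hc (geom_block ha hb hw hc).1 (geom_block ha hb hw hc).2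

lemma tprod_geom_ne_zero {c w : ℂ} {a b : ℕ} (ha : 1 ≤ a) (hb : 1 ≤ b) (hw : ‖w‖ < 1)
    (hc : ‖c * w^b‖ < 1) :
    (∏' n : ℕ, (1 + c * w^(a*n+b))) ≠ 0 :=
  tprod_ne_zero hc (geom_block ha hb hw hc).1 (geom_block ha hb hw hc).2

theorem jtp (q z : ℂ) (hq0 : q ≠ 0) (hq1 : ‖q‖ < 1) (hz : z ≠ 0)
    (hzq : ‖z*q‖ < 1) (hzq' : ‖z⁻¹*q‖ < 1) :
    ∑' m : ℤ, q^(m^2) * z^m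
      = (∏' n:ℕ, (1 - (q^2)^(n+1)))
        * ((∏' n:ℕ, (1 + z*q^(2*n+1))) * (∏' n:ℕ, (1 + z⁻¹*q^(2*n+1)))) := by
  have hq0' : 0 < ‖q‖ := norm_pos_iff.2 hq0
  have hz0' : 0 < ‖z‖ := norm_pos_iff.2 hz
  have hQ1 : ‖(q^2 : ℂ)‖ < 1 := by
    rw [norm_pow]; exact pow_lt_one₀ (norm_nonneg q) hq1 two_ne_zero
  have hQc : ‖(-1 : ℂ) * (q^2)^1‖ < 1 := by simpa using hQ1
  have hc1 : ‖z * q^1‖ < 1 := by simpa using hzq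
  have hc2 : ‖z⁻¹ * q^1‖ < 1 := by simpa using hzq'
  have M1 : Multipliable (fun n : ℕ => 1 - (q^2)^(n+1)) := by
    have := multipliable_geom (c := -1) (w := q^2) (a := 1) (b := 1) le_rfl le_rfl hQ1 hQc
    apply this.congr
    intro n
    rw [show 1*n+1 = n+1 from by omega]
    ring
  have M2 : Multipliable (fun n : ℕ => 1 + z * q^(2*n+1)) :=
    multipliable_geom (a := 2) (b := 1) (by omega) le_rfl hq1 hc1
  have M3 : Multipliable (fun n : ℕ => 1 + z⁻¹ * q^(2*n+1)) :=
    multipliable_geom (a := 2) (b := 1) (by omega) le_rfl hq1 hc2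
  set P : ℂ := ∏' n:ℕ, (1 - (q^2)^(n+1)) with hPdef
  have hPne : P ≠ 0 := by
    have hfun : (fun n : ℕ => 1 - (q^2)^(n+1)) = (fun n : ℕ => 1 + (-1) * (q^2)^(1*n+1)) := by
      funext n
      rw [show 1*n+1 = n+1 from by omega]
      ring
    rw [hPdef, hfun]
    exact tprod_geom_ne_zero (c := -1) (w := q^2) (a := 1) (b := 1) le_rfl le_rfl hQ1 hQc
  have hP : Tendsto (fun k => Dp (q^2) k) atTop (𝓝 P) := by
    have := M1.hasProd.tendsto_prod_nat
    exact this
  -- coefficient limits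
  have hcoef : ∀ m : ℤ, Tendsto (fun N => uu q z N m) atTop (𝓝 (P⁻¹ * (q^(m^2) * z^m))) := by
    intro m
    have t2N : Tendsto (fun N : ℕ => 2*N) atTop atTop :=
      tendsto_atTop_atTop.2 fun b => ⟨b, fun a hab => by omega⟩
    have tA : Tendsto (fun N : ℕ => ((N:ℤ)+m).toNat) atTop atTop :=
      tendsto_atTop_atTop.2 fun b => ⟨b + m.natAbs, fun a hab => by omega⟩
    have tB : Tendsto (fun N : ℕ => ((N:ℤ)-m).toNat) atTop atTop :=
      tendsto_atTop_atTop.2 fun b => ⟨b + m.natAbs, fun a hab => by omega⟩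
    have l4 : Tendsto (fun N => Dp (q^2) (2*N) /
        (Dp (q^2) ((N:ℤ)+m).toNat * Dp (q^2) ((N:ℤ)-m).toNat)) atTop (𝓝 (P / (P*P))) :=
      (hP.comp t2N).div ((hP.comp tA).mul (hP.comp tB)) (mul_ne_zero hPne hPne)
    have l5 : Tendsto (fun N => Dp (q^2) (2*N) /
        (Dp (q^2) ((N:ℤ)+m).toNat * Dp (q^2) ((N:ℤ)-m).toNat) * q^(m^2) * z^m) atTop
        (𝓝 (P / (P*P) * q^(m^2) * z^m)) := (l4.mul_const _).mul_const _
    have heq : P / (P*P) * q^(m^2) * z^m = P⁻¹ * (q^(m^2) * z^m) := by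
      field_simp
    rw [heq] at l5
    apply Tendsto.congr' ?_ l5
    filter_upwards [eventually_ge_atTop m.natAbs] with N hN
    simp only [uu]
    rw [if_pos hN]
  -- uniform bound
  set r : ℝ := ‖q‖^2 with hrdef
  have hr0 : 0 ≤ r := by positivity
  have hr1 : r < 1 := by rw [hrdef]; exact pow_lt_one₀ (norm_nonneg q) hq1 two_ne_zero
  have hfQ : ∀ j : ℕ, ‖(q^2)^(j+1)‖ ≤ r^(j+1) := by
    intro j
    rw [norm_pow, norm_pow]
  set A : ℝ := rexp (∑' j:ℕ, (r^(j+1):ℝ)) with hAdef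
  set B : ℝ := rexp (∑' j:ℕ, Real.log (1 - r^(j+1))) with hBdef
  have hBpos : 0 < B := Real.exp_pos _
  have hApos : 0 < A := Real.exp_pos _
  have hDup : ∀ k, ‖Dp (q^2) k‖ ≤ A := fun k => prod_upper hr0 hr1 hfQ k
  have hDlo : ∀ k, B ≤ ‖Dp (q^2) k‖ := fun k => prod_one_sub_lower hr0 hr1 hfQ k
  have hbound : ∀ N : ℕ, ∀ m : ℤ, ‖uu q z N m‖ ≤ (A/(B*B)) * (‖q‖^(m^2) * ‖z‖^m) := by
    intro N m
    have hq2pos : (0:ℝ) ≤ ‖q‖^(m^2:ℤ) * ‖z‖^m := by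
      apply mul_nonneg (zpow_nonneg (norm_nonneg q) _) (zpow_nonneg (norm_nonneg z) _)
    simp only [uu]
    split_ifs with hcond
    · have hc' : ‖Dp (q ^ 2) (2 * N)‖ /
          (‖Dp (q ^ 2) ((N:ℤ) + m).toNat‖ * ‖Dp (q ^ 2) ((N:ℤ) - m).toNat‖) ≤ A/(B*B) :=
        div_le_div₀ hApos.le (hDup _) (mul_pos hBpos hBpos)
          (mul_le_mul (hDlo _) (hDlo _) hBpos.le (norm_nonneg _))
      calc ‖Dp (q^2) (2*N) / (Dp (q^2) ((N:ℤ)+m).toNat * Dp (q^2) ((N:ℤ)-m).toNat)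
              * q^(m^2) * z^m‖
          = ‖Dp (q ^ 2) (2 * N)‖ /
              (‖Dp (q ^ 2) ((N:ℤ) + m).toNat‖ * ‖Dp (q ^ 2) ((N:ℤ) - m).toNat‖)
              * (‖q‖^(m^2) * ‖z‖^m) := by
            rw [norm_mul, norm_mul, norm_div, norm_mul, norm_zpow, norm_zpow]
            ring
        _ ≤ A/(B*B) * (‖q‖^(m^2) * ‖z‖^m) := mul_le_mul_of_nonneg_right hc' hq2pos
    · rw [norm_zero]
      positivity
  have hboundsum : Summable (fun m : ℤ => (A/(B*B)) * (‖q‖^(m^2) * ‖z‖^m)) :=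
    (summable_zpow_sq ‖q‖ ‖z‖ hq0' hq1 hz0').mul_left _
  have key := tendsto_tsum_of_dominated_convergence hboundsum hcoef
    (Filter.Eventually.of_forall hbound)
  have hJ : Tendsto (fun N => ∑' m, uu q z N m) atTop
      (𝓝 ((∏' n:ℕ, (1 + z*q^(2*n+1))) * (∏' n:ℕ, (1 + z⁻¹*q^(2*n+1))))) := by
    have hmul := (M2.hasProd.tendsto_prod_nat).mul (M3.hasProd.tendsto_prod_nat)
    apply Tendsto.congr _ hmul
    intro N
    rw [← Finset.prod_mul_distrib, finite_jtp q z hq0 hq1 hz N]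
  have huniq : ∑' m : ℤ, P⁻¹ * (q^(m^2) * z^m)
      = (∏' n:ℕ, (1 + z*q^(2*n+1))) * (∏' n:ℕ, (1 + z⁻¹*q^(2*n+1))) :=
    tendsto_nhds_unique key hJ
  rw [tsum_mul_left] at huniq
  rw [← huniq]
  field_simp


noncomputable def qf (a b c : ℂ) (n : ℤ) : ℂ := cexp (a * n^2 + b * n + c)

lemma qf_eq (a b c : ℂ) (n : ℤ) : qf a b c n = cexp c * cexp (a * n^2 + b * n) := by
  rw [qf, ← Complex.exp_add]
  congr 1
  ring

lemma summable_norm_qf {a : ℂ} (b c : ℂ) (ha : a.re < 0) :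
    Summable fun n : ℤ => ‖qf a b c n‖ := by
  simp only [qf_eq, norm_mul]
  exact (summable_norm_cexp_quad a b ha).mul_left _

lemma summable_qf {a : ℂ} (b c : ℂ) (ha : a.re < 0) : Summable (qf a b c) :=
  (summable_norm_qf b c ha).of_norm

lemma re_piI_mul (u : ℂ) : ((π:ℂ) * Complex.I * u).re = -π * u.im := by
  simp [Complex.mul_re, Complex.mul_im]

def ezz : ℤ × ℤ ≃ ℤ × ℤ where
  toFun p := (p.1 - p.2, p.2)
  invFun p := (p.1 + p.2, p.2)
  left_inv p := by cases p; simp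
  right_inv p := by cases p; simp

lemma mult_pm (w : ℂ) (hw : ‖w‖ < 1) (c : ℂ) (hc : ‖c‖ = 1) (a b : ℕ)
    (ha : 1 ≤ a) (hb : 1 ≤ b) :
    Multipliable (fun n : ℕ => 1 + c * w^(a*n+b)) := by
  apply multipliable_geom ha hb hw
  rw [norm_mul, hc, one_mul, norm_pow]
  exact pow_lt_one₀ (norm_nonneg w) hw (by omega)

lemma mult_sub (w : ℂ) (hw : ‖w‖ < 1) (a b : ℕ) (ha : 1 ≤ a) (hb : 1 ≤ b) :
    Multipliable (fun n : ℕ => 1 - w^(a*n+b)) :=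
  (mult_pm w hw (-1) (by simp) a b ha hb).congr (fun n => by ring)

lemma mult_add (w : ℂ) (hw : ‖w‖ < 1) (a b : ℕ) (ha : 1 ≤ a) (hb : 1 ≤ b) :
    Multipliable (fun n : ℕ => 1 + w^(a*n+b)) :=
  (mult_pm w hw 1 (by simp) a b ha hb).congr (fun n => by ring)

lemma tprod_sub_ne (w : ℂ) (hw : ‖w‖ < 1) (a b : ℕ) (ha : 1 ≤ a) (hb : 1 ≤ b) :
    (∏' n : ℕ, (1 - w^(a*n+b))) ≠ 0 := by
  have hfun : (fun n : ℕ => 1 - w^(a*n+b)) = (fun n : ℕ => 1 + (-1) * w^(a*n+b)) := by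
    funext n; ring
  rw [hfun]
  apply tprod_geom_ne_zero ha hb hw
  rw [norm_mul, norm_neg, norm_one, one_mul, norm_pow]
  exact pow_lt_one₀ (norm_nonneg w) hw (by omega)

lemma tprod_add_ne (w : ℂ) (hw : ‖w‖ < 1) (a b : ℕ) (ha : 1 ≤ a) (hb : 1 ≤ b) :
    (∏' n : ℕ, (1 + w^(a*n+b))) ≠ 0 := by
  have hfun : (fun n : ℕ => 1 + w^(a*n+b)) = (fun n : ℕ => 1 + (1:ℂ) * w^(a*n+b)) := by
    funext n; ring
  rw [hfun]
  apply tprod_geom_ne_zero ha hb hw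
  rw [norm_mul, norm_one, one_mul, norm_pow]
  exact pow_lt_one₀ (norm_nonneg w) hw (by omega)

lemma tprod_split (f : ℕ → ℂ) (he : Multipliable fun k => f (2*k))
    (ho : Multipliable fun k => f (2*k+1)) :
    ∏' n, f n = (∏' k, f (2*k)) * ∏' k, f (2*k+1) :=
  (he.hasProd.even_mul_odd ho.hasProd).tprod_eq

theorem theta_halving' (τ : ℂ) (hτ : 0 < τ.im) (z : ℂ) :
    theta 0 1 τ z * theta 1 1 τ z
      = _root_.eta τ ^ 2 / _root_.eta (τ / 2) * theta 1 1 (τ / 2) z := by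
  set pI : ℂ := (π:ℂ) * Complex.I with hpI
  have hreτ : (pI * τ).re < 0 := by
    rw [hpI, re_piI_mul]
    nlinarith [Real.pi_pos]
  have hreτ2 : (pI * τ / 2).re < 0 := by
    have : pI * τ / 2 = pI * (τ/2) := by ring
    rw [this, hpI, re_piI_mul]
    have h2 : (τ/2).im = τ.im/2 := by
      rw [show (2:ℂ) = ((2:ℝ):ℂ) from by norm_num, Complex.div_ofReal_im]
    rw [h2]
    nlinarith [Real.pi_pos]
  -- canonical forms of the three thetas
  have ht01 : theta 0 1 τ z = ∑' n : ℤ, qf (pI*τ) (2*pI*z + pI) 0 n := by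
    rw [theta]
    apply tsum_congr
    intro n
    rw [qf, ← Complex.exp_add, ← Complex.exp_add]
    congr 1
    push_cast
    ring
  have ht11 : theta 1 1 τ z = ∑' n : ℤ, qf (pI*τ) (pI*τ + 2*pI*z + pI) (pI*τ/4 + pI*z) n := by
    rw [theta]
    apply tsum_congr
    intro n
    rw [qf, ← Complex.exp_add, ← Complex.exp_add]
    congr 1
    push_cast
    ring
  have htF : theta 1 1 (τ/2) z
      = ∑' n : ℤ, qf (pI*τ/2) (pI*τ/2 + 2*pI*z + pI) (pI*τ/8 + pI*z) n := by
    rw [theta]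
    apply tsum_congr
    intro n
    rw [qf, ← Complex.exp_add, ← Complex.exp_add]
    congr 1
    push_cast
    ring
  set aG : ℂ := pI*τ/2 with haG
  set bG : ℂ := -(pI*τ/2) with hbG
  set cG : ℂ := pI*τ/8 with hcG
  set aF : ℂ := pI*τ/2 with haF
  set bF : ℂ := pI*τ/2 + 2*pI*z + pI with hbF
  set cF : ℂ := pI*τ/8 + pI*z with hcF
  have sf : Summable fun n : ℤ => ‖qf (pI*τ) (2*pI*z + pI) 0 n‖ :=
    summable_norm_qf _ _ hreτ
  have sg : Summable fun n : ℤ => ‖qf (pI*τ) (pI*τ + 2*pI*z + pI) (pI*τ/4 + pI*z) n‖ :=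
    summable_norm_qf _ _ hreτ
  have key1 : ∀ p : ℤ × ℤ,
      qf (pI*τ) (2*pI*z + pI) 0 (p.1 - p.2) * qf (pI*τ) (pI*τ + 2*pI*z + pI) (pI*τ/4 + pI*z) p.2
        = qf aF bF cF p.1 * qf aG bG cG (p.1 - 2*p.2) := by
    intro p
    rw [qf, qf, qf, qf, ← Complex.exp_add, ← Complex.exp_add]
    congr 1
    push_cast
    ring
  have hsum0 : Summable (fun p : ℤ × ℤ =>
      qf (pI*τ) (2*pI*z + pI) 0 p.1 * qf (pI*τ) (pI*τ + 2*pI*z + pI) (pI*τ/4 + pI*z) p.2) :=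
    summable_mul_of_summable_norm sf sg
  have hsum2 : Summable (fun p : ℤ × ℤ => qf aF bF cF p.1 * qf aG bG cG (p.1 - 2*p.2)) := by
    have h1 := (ezz.summable_iff (f := fun p : ℤ × ℤ =>
      qf (pI*τ) (2*pI*z + pI) 0 p.1 * qf (pI*τ) (pI*τ + 2*pI*z + pI) (pI*τ/4 + pI*z) p.2)).2 hsum0
    exact h1.congr key1
  have hGsum : Summable (qf aG bG cG) := summable_qf _ _ hreτ2
  have hinner : ∀ a : ℤ, Summable (fun n : ℤ => qf aF bF cF a * qf aG bG cG (a - 2*n)) := by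
    intro a
    apply Summable.mul_left
    exact hGsum.comp_injective (fun x y hxy => by omega)
  -- the inner sum is independent of a
  set H0 : ℂ := ∑' n : ℤ, qf aG bG cG (-2*n) with hH0
  have gsym : ∀ m : ℤ, qf aG bG cG (1 - m) = qf aG bG cG m := by
    intro m
    rw [qf, qf]
    congr 1
    rw [haG, hbG, hcG]
    push_cast
    ring
  have hH : ∀ a : ℤ, (∑' n : ℤ, qf aG bG cG (a - 2*n)) = H0 := by
    intro a
    rcases Int.even_or_odd a with ⟨k, hk⟩ | ⟨k, hk⟩
    · calc ∑' n : ℤ, qf aG bG cG (a - 2*n)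
          = ∑' n : ℤ, qf aG bG cG (-2*(n - k)) :=
            tsum_congr (fun n => by rw [hk]; congr 1; ring)
        _ = ∑' n : ℤ, qf aG bG cG (-2*n) :=
            (Equiv.subRight k).tsum_eq (fun n => qf aG bG cG (-2*n))
    · calc ∑' n : ℤ, qf aG bG cG (a - 2*n)
          = ∑' n : ℤ, qf aG bG cG (1 - 2*(n - k)) :=
            tsum_congr (fun n => by rw [hk]; congr 1; ring)
        _ = ∑' n : ℤ, qf aG bG cG (1 - 2*n) :=
            (Equiv.subRight k).tsum_eq (fun n => qf aG bG cG (1 - 2*n))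
        _ = ∑' n : ℤ, qf aG bG cG (2*n) := tsum_congr (fun n => gsym (2*n))
        _ = ∑' n : ℤ, qf aG bG cG (-2*(-n)) := tsum_congr (fun n => by congr 1; ring)
        _ = ∑' n : ℤ, qf aG bG cG (-2*n) :=
            (Equiv.neg ℤ).tsum_eq (fun n => qf aG bG cG (-2*n))
  -- main rearrangement
  have main1 : theta 0 1 τ z * theta 1 1 τ z = theta 1 1 (τ/2) z * H0 := by
    rw [ht01, ht11, tsum_mul_tsum_of_summable_norm sf sg]
    rw [← ezz.tsum_eq (f := fun p : ℤ × ℤ =>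
      qf (pI*τ) (2*pI*z + pI) 0 p.1 * qf (pI*τ) (pI*τ + 2*pI*z + pI) (pI*τ/4 + pI*z) p.2)]
    calc ∑' p : ℤ × ℤ, qf (pI*τ) (2*pI*z + pI) 0 ((ezz p).1)
            * qf (pI*τ) (pI*τ + 2*pI*z + pI) (pI*τ/4 + pI*z) ((ezz p).2)
        = ∑' p : ℤ × ℤ, qf aF bF cF p.1 * qf aG bG cG (p.1 - 2*p.2) := tsum_congr key1
      _ = ∑' a : ℤ, ∑' n : ℤ, qf aF bF cF a * qf aG bG cG (a - 2*n) :=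
          Summable.tsum_prod' hsum2 hinner
      _ = ∑' a : ℤ, qf aF bF cF a * H0 := by
          apply tsum_congr
          intro a
          rw [tsum_mul_left, hH a]
      _ = theta 1 1 (τ/2) z * H0 := by rw [tsum_mul_right, ← htF]
  -- now evaluate H0 via the triple product
  set w : ℂ := cexp (pI * τ) with hw
  have hw0 : w ≠ 0 := Complex.exp_ne_zero _
  have hwlt : ‖w‖ < 1 := by
    rw [hw, Complex.norm_exp]
    exact Real.exp_lt_one_iff.2 hreτ
  have hwpow : ∀ k : ℕ, w^k = cexp ((k:ℂ) * (pI * τ)) := by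
    intro k
    rw [Complex.exp_nat_mul]
  have hq0' : w^2 ≠ 0 := pow_ne_zero _ hw0
  have hq1' : ‖w^2‖ < 1 := by
    rw [norm_pow]
    exact pow_lt_one₀ (norm_nonneg w) hwlt two_ne_zero
  have hzq : ‖w * w^2‖ < 1 := by
    rw [show w * w^2 = w^3 from by ring, norm_pow]
    exact pow_lt_one₀ (norm_nonneg w) hwlt (by omega)
  have hzq' : ‖w⁻¹ * w^2‖ < 1 := by
    rw [show w⁻¹ * w^2 = w^2 * w⁻¹ from by ring, pow_two, mul_assoc,
      mul_inv_cancel₀ hw0, mul_one]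
    exact hwlt
  have hS : H0 = cexp (pI*τ/8) * ∑' n : ℤ, (w^2)^(n^2) * w^n := by
    rw [hH0, ← tsum_mul_left]
    apply tsum_congr
    intro n
    have e1 : (w^2 : ℂ)^(n^2) = cexp ((n^2 : ℤ) * ((2:ℂ) * (pI * τ))) := by
      rw [show (w^2 : ℂ) = cexp ((2:ℂ) * (pI * τ)) from by
        rw [hwpow 2]; norm_cast, Complex.exp_int_mul]
    have e2 : w^n = cexp ((n : ℤ) * (pI * τ)) := by
      rw [hw, Complex.exp_int_mul]
    rw [e1, e2, qf, ← Complex.exp_add, ← Complex.exp_add]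
    congr 1
    push_cast
    rw [haG, hbG, hcG]
    ring
  have hjtp := jtp (w^2) w hq0' hq1' hw0 hzq hzq'
  -- convert the products to powers of w
  have c1 : (∏' n : ℕ, (1 - ((w^2)^2)^(n+1))) = ∏' n : ℕ, (1 - w^(4*n+4)) :=
    tprod_congr (fun n => by ring_nf)
  have c2 : (∏' n : ℕ, (1 + w * (w^2)^(2*n+1))) = ∏' n : ℕ, (1 + w^(4*n+3)) :=
    tprod_congr (fun n => by ring_nf)
  have c3 : (∏' n : ℕ, (1 + w⁻¹ * (w^2)^(2*n+1))) = ∏' n : ℕ, (1 + w^(4*n+1)) := by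
    apply tprod_congr
    intro n
    congr 1
    rw [show ((w^2)^(2*n+1) : ℂ) = w * w^(4*n+1) from by ring, ← mul_assoc,
      inv_mul_cancel₀ hw0, one_mul]
  rw [c1, c2, c3] at hjtp
  -- product identities
  have i2 : (∏' n : ℕ, (1 - w^(2*n+2)))
      = (∏' k : ℕ, (1 - w^(4*k+2))) * ∏' k : ℕ, (1 - w^(4*k+4)) := by
    rw [tprod_split (fun n => 1 - w^(2*n+2))
      ((mult_sub w hwlt 4 2 (by omega) (by omega)).congr
        (fun k => by rw [show 4*k+2 = 2*(2*k)+2 from by ring]))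
      ((mult_sub w hwlt 4 4 (by omega) (by omega)).congr
        (fun k => by rw [show 4*k+4 = 2*(2*k+1)+2 from by ring]))]
    congr 1
    · exact tprod_congr (fun k => by rw [show 2*(2*k)+2 = 4*k+2 from by ring])
    · exact tprod_congr (fun k => by rw [show 2*(2*k+1)+2 = 4*k+4 from by ring])
  have i3 : (∏' n : ℕ, (1 + w^(2*n+1)))
      = (∏' k : ℕ, (1 + w^(4*k+1))) * ∏' k : ℕ, (1 + w^(4*k+3)) := by
    rw [tprod_split (fun n => 1 + w^(2*n+1))
      ((mult_add w hwlt 4 1 (by omega) (by omega)).congr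
        (fun k => by rw [show 4*k+1 = 2*(2*k)+1 from by ring]))
      ((mult_add w hwlt 4 3 (by omega) (by omega)).congr
        (fun k => by rw [show 4*k+3 = 2*(2*k+1)+1 from by ring]))]
    congr 1
    · exact tprod_congr (fun k => by rw [show 2*(2*k)+1 = 4*k+1 from by ring])
    · exact tprod_congr (fun k => by rw [show 2*(2*k+1)+1 = 4*k+3 from by ring])
  have i4 : (∏' n : ℕ, (1 - w^(2*n+1))) * ∏' n : ℕ, (1 + w^(2*n+1))
      = ∏' n : ℕ, (1 - w^(4*n+2)) := by
    rw [← Multipliable.tprod_mul (mult_sub w hwlt 2 1 (by omega) (by omega))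
      (mult_add w hwlt 2 1 (by omega) (by omega))]
    exact tprod_congr (fun n => by ring)
  have i1 : (∏' n : ℕ, (1 - w^(n+1)))
      = (∏' k : ℕ, (1 - w^(2*k+1))) * ∏' k : ℕ, (1 - w^(2*k+2)) := by
    rw [tprod_split (fun n => 1 - w^(n+1))
      ((mult_sub w hwlt 2 1 (by omega) (by omega)).congr (fun k => rfl))
      ((mult_sub w hwlt 2 2 (by omega) (by omega)).congr (fun k => rfl))]
  -- eta evaluations
  have heta1 : _root_.eta τ = cexp (pI*τ/12) * ∏' n : ℕ, (1 - w^(2*n+2)) := by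
    rw [_root_.eta]
    congr 1
    apply tprod_congr
    intro n
    congr 1
    rw [hwpow (2*n+2)]
    congr 1
    push_cast
    ring
  have heta2 : _root_.eta (τ/2) = cexp (pI*τ/24) * ∏' n : ℕ, (1 - w^(n+1)) := by
    rw [_root_.eta]
    congr 1
    · congr 1
      ring
    · apply tprod_congr
      intro n
      congr 1
      rw [hwpow (n+1)]
      congr 1
      push_cast
      ring
  -- nonvanishing
  have hPodne : (∏' n : ℕ, (1 - w^(2*n+1))) ≠ 0 := tprod_sub_ne w hwlt 2 1 (by omega) (by omega)
  have hPene : (∏' n : ℕ, (1 - w^(2*n+2))) ≠ 0 := tprod_sub_ne w hwlt 2 2 (by omega) (by omega)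
  -- final assembly
  have key : (∏' n : ℕ, (1 - w^(2*n+2)))
      = (∏' n : ℕ, (1 - w^(2*n+1))) *
        ((∏' k : ℕ, (1 + w^(4*k+1))) * ∏' k : ℕ, (1 + w^(4*k+3))) *
        ∏' k : ℕ, (1 - w^(4*k+4)) := by
    rw [i2, ← i4, i3]
  have hexp : cexp (pI*τ/12)^2 = cexp (pI*τ/8) * cexp (pI*τ/24) := by
    rw [← Complex.exp_add, sq, ← Complex.exp_add]
    congr 1
    ring
  have h41ne := tprod_add_ne w hwlt 4 1 (by omega) (by omega)
  have h43ne := tprod_add_ne w hwlt 4 3 (by omega) (by omega)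
  have h44ne := tprod_sub_ne w hwlt 4 4 (by omega) (by omega)
  have hquot : _root_.eta τ ^ 2 / _root_.eta (τ/2)
      = cexp (pI*τ/8) * ((∏' n : ℕ, (1 - w^(4*n+4))) *
          ((∏' n : ℕ, (1 + w^(4*n+3))) * ∏' n : ℕ, (1 + w^(4*n+1)))) := by
    rw [heta1, heta2, i1, key, mul_pow, hexp]
    rw [div_eq_iff (by
      exact mul_ne_zero (Complex.exp_ne_zero _) (mul_ne_zero hPodne
        (mul_ne_zero (mul_ne_zero hPodne (mul_ne_zero h41ne h43ne)) h44ne)))]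
    ring
  rw [main1, hS, hjtp, hquot]
  ring

end ThetaHalv

theorem theta_halving (τ : ℂ) (hτ : 0 < τ.im) (z : ℂ) :
    theta 0 1 τ z * theta 1 1 τ z = eta τ ^ 2 / eta (τ / 2) * theta 1 1 (τ / 2) z :=
  ThetaHalv.theta_halving' τ hτ z
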